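/- Let ℓ be a positive integer, let s₀, s ∈ [0, s̄₁] with s₀ ≠ s̄_ℓ, and suppose T ≥ 0 satisfies φ(ℓ, s₀, T) = s. Then |s − s₀| / max(D·s_in, k·μ(s̄₁)·ℓ) ≤ T ≤ |s − s₀| / (D·|s̄_ℓ − s|). -/

import Mathlib

open Set Filter Topology

private lemma aux_le_of_deriv_nonneg {ψ g : ℝ → ℝ} {a b : ℝ} (hab : a ≤ b)
    (hc : ContinuousOn ψ (Set.Icc a b))
    (hd : ∀ t ∈ Set.Ioo a b, HasDerivAt ψ (g t) t)
    (hg : ∀ t ∈ Set.Ioo a b, 0 ≤ g t) : ψ a ≤ ψ b := by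
  have h := monotoneOn_of_deriv_nonneg (convex_Icc a b) hc
    (fun t ht => by
      rw [interior_Icc] at ht
      exact (hd t ht).differentiableAt.differentiableWithinAt)
    (fun t ht => by
      rw [interior_Icc] at ht
      rw [(hd t ht).deriv]
      exact hg t ht)
  exact h (Set.left_mem_Icc.2 hab) (Set.right_mem_Icc.2 hab) hab

private lemma aux_first_hit {φ : ℝ → ℝ} {c T : ℝ}
    (hc : ContinuousOn φ (Set.Icc 0 T)) (h0 : c < φ 0)
    (hhit : ∃ t ∈ Set.Icc 0 T, φ t ≤ c) :
    ∃ τ ∈ Set.Ioc 0 T, φ τ = c ∧ ∀ u ∈ Set.Ico 0 τ, c < φ u := by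
  set S := Set.Icc 0 T ∩ φ ⁻¹' Set.Iic c with hS
  have hSclosed : IsClosed S := hc.preimage_isClosed_of_isClosed isClosed_Icc isClosed_Iic
  obtain ⟨t₀, ht₀, ht₀c⟩ := hhit
  have hSne : S.Nonempty := ⟨t₀, ht₀, ht₀c⟩
  have hbdd : BddBelow S := ⟨0, fun x hx => hx.1.1⟩
  set τ := sInf S with hτ
  have hτS : τ ∈ S := hSclosed.csInf_mem hSne hbdd
  have hτmem : τ ∈ Set.Icc 0 T := hτS.1
  have hlt : ∀ u ∈ Set.Ico 0 τ, c < φ u := by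
    intro u hu
    by_contra h
    exact absurd (csInf_le hbdd (⟨⟨hu.1, hu.2.le.trans hτmem.2⟩, not_lt.1 h⟩ : u ∈ S))
      (not_le.2 hu.2)
  have hτpos : 0 < τ := by
    rcases lt_or_eq_of_le hτmem.1 with h | h
    · exact h
    · rw [← h] at hτS
      exact absurd hτS.2 (not_le.2 h0)
  have hφτ : φ τ = c := by
    rcases eq_or_lt_of_le (show φ τ ≤ c from hτS.2) with h | h
    · exact h
    · exfalso
      have hsub : Set.Icc (0:ℝ) τ ⊆ Set.Icc 0 T := Set.Icc_subset_Icc le_rfl hτmem.2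
      obtain ⟨u, hu, hu0⟩ := intermediate_value_Icc' hτmem.1 (hc.mono hsub) ⟨h.le, h0.le⟩
      have huS : u ∈ S := ⟨⟨hu.1, hu.2.trans hτmem.2⟩, hu0.le⟩
      have hτu : τ ≤ u := csInf_le hbdd huS
      have : u = τ := le_antisymm hu.2 hτu
      rw [this] at hu0
      exact absurd hu0 (ne_of_lt h)
  exact ⟨τ, ⟨hτpos, hτmem.2⟩, hφτ, hlt⟩

private lemma aux_stay_nonneg {φ : ℝ → ℝ} {T : ℝ}
    (hc : ContinuousOn φ (Set.Icc 0 T)) (h0 : 0 ≤ φ 0)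
    (hd : ∀ t ∈ Set.Icc 0 T, φ t = 0 → ∃ d, 0 < d ∧ HasDerivWithinAt φ d (Set.Ici 0) t) :
    ∀ t ∈ Set.Icc 0 T, 0 ≤ φ t := by
  by_contra h
  push_neg at h
  obtain ⟨t₁, ht₁, ht₁neg⟩ := h
  set S := Set.Icc 0 t₁ ∩ φ ⁻¹' Set.Ici 0 with hS
  have hclosed : IsClosed S :=
    (hc.mono (Set.Icc_subset_Icc le_rfl ht₁.2)).preimage_isClosed_of_isClosed
      isClosed_Icc isClosed_Ici
  have hne : S.Nonempty := ⟨0, ⟨le_rfl, ht₁.1⟩, h0⟩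
  have hbdd : BddAbove S := ⟨t₁, fun x hx => hx.1.2⟩
  set σ := sSup S with hσdef
  have hσS : σ ∈ S := hclosed.csSup_mem hne hbdd
  have hσ0 : 0 ≤ σ := hσS.1.1
  have hσt₁ : σ ≤ t₁ := hσS.1.2
  have hgt : ∀ u, σ < u → u ≤ t₁ → φ u < 0 := by
    intro u h1 h2
    by_contra hcon
    exact absurd (le_csSup hbdd (⟨⟨hσ0.trans h1.le, h2⟩, not_lt.1 hcon⟩ : u ∈ S))
      (not_le.2 h1)
  have hσlt : σ < t₁ := by
    rcases lt_or_eq_of_le hσt₁ with h' | h'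
    · exact h'
    · rw [h'] at hσS
      exact absurd hσS.2 (not_le.2 ht₁neg)
  have hφσ : φ σ = 0 := by
    rcases eq_or_lt_of_le (show (0:ℝ) ≤ φ σ from hσS.2) with h' | h'
    · exact h'.symm
    · exfalso
      have hsub : Set.Icc σ t₁ ⊆ Set.Icc 0 T := Set.Icc_subset_Icc hσ0 ht₁.2
      obtain ⟨u, hu, hu0⟩ := intermediate_value_Icc' hσlt.le (hc.mono hsub) ⟨ht₁neg.le, h'.le⟩
      have huS : u ∈ S := ⟨⟨hσ0.trans hu.1, hu.2⟩, hu0.ge⟩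
      have huσ : u ≤ σ := le_csSup hbdd huS
      have : u = σ := le_antisymm huσ hu.1
      rw [this] at hu0
      exact absurd hu0.symm (ne_of_lt h')
  obtain ⟨d, hdpos, hder⟩ := hd σ ⟨hσ0, hσt₁.trans ht₁.2⟩ hφσ
  have hslope := hasDerivWithinAt_iff_tendsto_slope.1 hder
  have hle : 𝓝[Set.Ioc σ t₁] σ ≤ 𝓝[Set.Ici 0 \ {σ}] σ :=
    nhdsWithin_mono σ (fun u hu => ⟨hσ0.trans hu.1.le, by simp [hu.1.ne']⟩)
  haveI hne' : (𝓝[Set.Ioc σ t₁] σ).NeBot := by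
    rw [nhdsWithin_Ioc_eq_nhdsGT hσlt]
    infer_instance
  have hev : ∀ᶠ u in 𝓝[Set.Ioc σ t₁] σ, 0 < slope φ σ u :=
    (hslope.mono_left hle).eventually (eventually_gt_nhds hdpos)
  obtain ⟨u, hu1, hu2⟩ := (hev.and eventually_mem_nhdsWithin).exists
  have hus : 0 < u - σ := sub_pos.2 hu2.1
  have heq : φ u - φ σ = slope φ σ u * (u - σ) := by
    rw [slope_def_field]
    field_simp
  have : 0 < φ u := by
    have h2 := mul_pos hu1 hus
    rw [← heq] at h2
    rw [hφσ] at h2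
    linarith
  exact absurd this (not_lt.2 (hgt u hu2.1 hu2.2).le)
set_option maxHeartbeats 2000000 in
/-- Bounds on the hitting time of the flow: if s₀, s ∈ [0, s̄₁], s₀ ≠ s̄_ℓ and
φ(ℓ, s₀, T) = s with T ≥ 0, then
|s − s₀| / max(D s_in, k μ(s̄₁) ℓ) ≤ T ≤ |s − s₀| / (D |s̄_ℓ − s|). -/
theorem stmt_10
    (D sIn k : ℝ) (μ : ℝ → ℝ)
    (hD : 0 < D) (hsIn : 0 < sIn) (hk : 0 < k)
    (hμC1 : ContDiffOn ℝ 1 μ (Set.Ici 0))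
    (hμmono : StrictMonoOn μ (Set.Ici 0))
    (hμ0 : μ 0 = 0)
    (hμpos : ∀ s : ℝ, 0 < s → 0 < μ s)
    (sbar : ℕ → ℝ)
    (hsbar_mem : ∀ ℓ : ℕ, 1 ≤ ℓ → sbar ℓ ∈ Set.Ioo 0 sIn)
    (hsbar_eq : ∀ ℓ : ℕ, 1 ≤ ℓ → D * (sIn - sbar ℓ) - k * μ (sbar ℓ) * (ℓ : ℝ) = 0)
    (phi : ℕ → ℝ → ℝ → ℝ)
    (hphi_init : ∀ ℓ : ℕ, 1 ≤ ℓ → ∀ s₀ : ℝ, 0 ≤ s₀ → phi ℓ s₀ 0 = s₀)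
    (hphi_deriv : ∀ ℓ : ℕ, 1 ≤ ℓ → ∀ s₀ : ℝ, 0 ≤ s₀ → ∀ t : ℝ, 0 ≤ t →
      HasDerivWithinAt (phi ℓ s₀)
        (D * (sIn - phi ℓ s₀ t) - k * μ (phi ℓ s₀ t) * (ℓ : ℝ)) (Set.Ici 0) t) :
    ∀ ℓ : ℕ, 1 ≤ ℓ → ∀ s₀ s : ℝ, s₀ ∈ Set.Icc 0 (sbar 1) → s ∈ Set.Icc 0 (sbar 1) →
      s₀ ≠ sbar ℓ → ∀ T : ℝ, 0 ≤ T → phi ℓ s₀ T = s →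
        |s - s₀| / max (D * sIn) (k * μ (sbar 1) * (ℓ : ℝ)) ≤ T ∧
        T ≤ |s - s₀| / (D * |sbar ℓ - s|) := by
  intro ℓ hℓ s₀ s hs₀ hs hne T hT hφT
  obtain ⟨hsb1pos, hsb1lt⟩ := hsbar_mem 1 le_rfl
  obtain ⟨hsblpos, hsbllt⟩ := hsbar_mem ℓ hℓ
  have hs₀0 : 0 ≤ s₀ := hs₀.1
  have hℓR : (1:ℝ) ≤ (ℓ:ℝ) := by exact_mod_cast hℓ
  have hℓpos : (0:ℝ) < (ℓ:ℝ) := lt_of_lt_of_le one_pos hℓR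
  set f : ℝ → ℝ := fun x => D * (sIn - x) - k * μ x * (ℓ : ℝ) with hfdef
  set φ : ℝ → ℝ := phi ℓ s₀ with hφdef
  have hφ0 : φ 0 = s₀ := hphi_init ℓ hℓ s₀ hs₀0
  have hcontφ : ContinuousOn φ (Set.Ici 0) := fun t ht =>
    (hphi_deriv ℓ hℓ s₀ hs₀0 t ht).continuousWithinAt
  have hcontT : ContinuousOn φ (Set.Icc 0 T) := hcontφ.mono (fun x hx => hx.1)
  have hderW : ∀ t, 0 ≤ t → HasDerivWithinAt φ (f (φ t)) (Set.Ici 0) t := fun t ht =>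
    hphi_deriv ℓ hℓ s₀ hs₀0 t ht
  have hder : ∀ t, 0 < t → HasDerivAt φ (f (φ t)) t := fun t ht =>
    (hderW t ht.le).hasDerivAt (Ici_mem_nhds ht)
  have hμnonneg : ∀ x, 0 ≤ x → 0 ≤ μ x := by
    intro x hx
    rcases hx.eq_or_lt with h | h
    · rw [← h, hμ0]
    · exact (hμpos x h).le
  have hμle : ∀ a b, 0 ≤ a → a ≤ b → μ a ≤ μ b := by
    intro a b ha hab
    rcases hab.eq_or_lt with h | h
    · rw [h]
    · exact (hμmono ha (ha.trans hab) h).le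
  have hfsbar : f (sbar ℓ) = 0 := hsbar_eq ℓ hℓ
  have hμsb1 : 0 < μ (sbar 1) := hμpos _ hsb1pos
  have hsble : sbar ℓ ≤ sbar 1 := by
    by_contra hcon
    push_neg at hcon
    have e1 := hsbar_eq 1 le_rfl
    have hprod : 0 ≤ k * μ (sbar 1) * ((ℓ:ℝ) - 1) :=
      mul_nonneg (mul_nonneg hk.le hμsb1.le) (by linarith)
    have h1 : f (sbar 1) ≤ 0 := by
      simp only [hfdef]
      push_cast at e1
      nlinarith
    have hm : μ (sbar 1) < μ (sbar ℓ) := hμmono hsb1pos.le hsblpos.le hcon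
    have h2 : f (sbar ℓ) < f (sbar 1) := by
      simp only [hfdef]
      have p2 : 0 < k * (μ (sbar ℓ) - μ (sbar 1)) * (ℓ:ℝ) :=
        mul_pos (mul_pos hk (sub_pos.2 hm)) hℓpos
      nlinarith
    rw [hfsbar] at h2
    linarith
  have hf_upper : ∀ x, 0 ≤ x → f x ≤ D * sIn := by
    intro x hx
    simp only [hfdef]
    have h1 : 0 ≤ k * μ x * (ℓ:ℝ) := mul_nonneg (mul_nonneg hk.le (hμnonneg x hx)) hℓpos.le
    nlinarith
  have hf_lower : ∀ x, 0 ≤ x → x ≤ sbar 1 → -(k * μ (sbar 1) * (ℓ:ℝ)) ≤ f x := by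
    intro x hx hx1
    simp only [hfdef]
    have h1 : μ x ≤ μ (sbar 1) := hμle x _ hx hx1
    have h2 : 0 ≤ D * (sIn - x) := mul_nonneg hD.le (by linarith)
    have h3 : k * μ x * (ℓ:ℝ) ≤ k * μ (sbar 1) * (ℓ:ℝ) :=
      mul_le_mul_of_nonneg_right (mul_le_mul_of_nonneg_left h1 hk.le) hℓpos.le
    linarith
  have hf_ge : ∀ x, 0 ≤ x → x ≤ sbar ℓ → D * (sbar ℓ - x) ≤ f x := by
    intro x hx hxl
    have h1 : μ x ≤ μ (sbar ℓ) := hμle x _ hx hxl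
    have h2 : k * μ x * (ℓ:ℝ) ≤ k * μ (sbar ℓ) * (ℓ:ℝ) :=
      mul_le_mul_of_nonneg_right (mul_le_mul_of_nonneg_left h1 hk.le) hℓpos.le
    have e := hfsbar
    simp only [hfdef] at e ⊢
    linarith
  have hf_le : ∀ x, sbar ℓ ≤ x → f x ≤ -(D * (x - sbar ℓ)) := by
    intro x hxl
    have h1 : μ (sbar ℓ) ≤ μ x := hμle _ x hsblpos.le hxl
    have h2 : k * μ (sbar ℓ) * (ℓ:ℝ) ≤ k * μ x * (ℓ:ℝ) :=
      mul_le_mul_of_nonneg_right (mul_le_mul_of_nonneg_left h1 hk.le) hℓpos.le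
    have e := hfsbar
    simp only [hfdef] at e ⊢
    nlinarith
  have hf_pos : ∀ x, 0 ≤ x → x < sbar ℓ → 0 < f x := fun x hx hxl =>
    lt_of_lt_of_le (mul_pos hD (sub_pos.2 hxl)) (hf_ge x hx hxl.le)
  have hf_neg : ∀ x, sbar ℓ < x → f x < 0 := fun x hxl =>
    lt_of_le_of_lt (hf_le x hxl.le) (neg_lt_zero.2 (mul_pos hD (sub_pos.2 hxl)))
  -- Lipschitz constant for μ on [0, sbar 1]
  have hIccIci : Set.Icc (0:ℝ) (sbar 1) ⊆ Set.Ici 0 := fun x hx => hx.1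
  have hcd : ContinuousOn (derivWithin μ (Set.Ici 0)) (Set.Ici 0) :=
    hμC1.continuousOn_derivWithin (uniqueDiffOn_Ici 0) le_rfl
  obtain ⟨K, hK⟩ := (isCompact_Icc :
    IsCompact (Set.Icc (0:ℝ) (sbar 1))).exists_bound_of_continuousOn (hcd.mono hIccIci)
  have hK0 : 0 ≤ K := le_trans (norm_nonneg _) (hK 0 ⟨le_rfl, hsb1pos.le⟩)
  have hdifIcc : DifferentiableOn ℝ μ (Set.Icc 0 (sbar 1)) :=
    (hμC1.mono hIccIci).differentiableOn one_ne_zero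
  have hbound : ∀ x ∈ Set.Icc (0:ℝ) (sbar 1), ‖derivWithin μ (Set.Icc 0 (sbar 1)) x‖ ≤ K := by
    intro x hx
    rw [derivWithin_subset hIccIci ((uniqueDiffOn_Icc hsb1pos) x hx)
      ((hμC1.differentiableOn one_ne_zero) x hx.1)]
    exact hK x hx
  have hKlip : ∀ a b, a ∈ Set.Icc (0:ℝ) (sbar 1) → b ∈ Set.Icc (0:ℝ) (sbar 1) →
      μ b - μ a ≤ K * |b - a| := by
    intro a b ha hb
    have h := Convex.norm_image_sub_le_of_norm_derivWithin_le hdifIcc hbound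
      (convex_Icc _ _) ha hb
    rw [Real.norm_eq_abs, Real.norm_eq_abs] at h
    exact le_trans (le_abs_self _) h
  set L := D + k * K * (ℓ:ℝ) with hLdef
  have hfL1 : ∀ x, 0 ≤ x → x ≤ sbar ℓ → f x ≤ L * (sbar ℓ - x) := by
    intro x hx hxl
    have hxmem : x ∈ Set.Icc (0:ℝ) (sbar 1) := ⟨hx, hxl.trans hsble⟩
    have hlmem : sbar ℓ ∈ Set.Icc (0:ℝ) (sbar 1) := ⟨hsblpos.le, hsble⟩
    have h1 : μ (sbar ℓ) - μ x ≤ K * (sbar ℓ - x) := by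
      have h := hKlip x (sbar ℓ) hxmem hlmem
      rwa [abs_of_nonneg (by linarith)] at h
    have h2 : k * (μ (sbar ℓ) - μ x) * (ℓ:ℝ) ≤ k * (K * (sbar ℓ - x)) * (ℓ:ℝ) :=
      mul_le_mul_of_nonneg_right (mul_le_mul_of_nonneg_left h1 hk.le) hℓpos.le
    have e := hfsbar
    simp only [hfdef, hLdef] at e ⊢
    nlinarith
  have hfL2 : ∀ x, sbar ℓ ≤ x → x ≤ sbar 1 → -(L * (x - sbar ℓ)) ≤ f x := by
    intro x hxl hx1
    have hxmem : x ∈ Set.Icc (0:ℝ) (sbar 1) := ⟨hsblpos.le.trans hxl, hx1⟩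
    have hlmem : sbar ℓ ∈ Set.Icc (0:ℝ) (sbar 1) := ⟨hsblpos.le, hsble⟩
    have h1 : μ x - μ (sbar ℓ) ≤ K * (x - sbar ℓ) := by
      have h := hKlip (sbar ℓ) x hlmem hxmem
      rwa [abs_of_nonneg (by linarith)] at h
    have h2 : k * (μ x - μ (sbar ℓ)) * (ℓ:ℝ) ≤ k * (K * (x - sbar ℓ)) * (ℓ:ℝ) :=
      mul_le_mul_of_nonneg_right (mul_le_mul_of_nonneg_left h1 hk.le) hℓpos.le
    have e := hfsbar
    simp only [hfdef, hLdef] at e ⊢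
    nlinarith
  set M := max (D * sIn) (k * μ (sbar 1) * (ℓ:ℝ)) with hMdef
  have hMpos : 0 < M := lt_max_iff.mpr (Or.inl (mul_pos hD hsIn))
  rcases hne.lt_or_gt with h1 | h1
  · -- Case 1 : s₀ < sbar ℓ
    have hpos0 : ∀ t ∈ Set.Icc 0 T, 0 ≤ φ t := by
      apply aux_stay_nonneg hcontT (by rw [hφ0]; exact hs₀0)
      intro t ht h0
      refine ⟨D * sIn, mul_pos hD hsIn, ?_⟩
      have hd' := hderW t ht.1
      rw [h0] at hd'
      simpa [hfdef, hμ0] using hd'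
    have hlt : ∀ t ∈ Set.Icc 0 T, φ t < sbar ℓ := by
      by_contra hcon
      push_neg at hcon
      obtain ⟨t₂, ht₂, ht₂ge⟩ := hcon
      obtain ⟨τ, hτmem, hφτ, hbefore⟩ := aux_first_hit (φ := fun t => -φ t) (c := -sbar ℓ)
        hcontT.neg (by simp only [hφ0]; linarith)
        ⟨t₂, ht₂, by show -φ t₂ ≤ -sbar ℓ; linarith⟩
      have hτ0 := hτmem.1
      have hτT := hτmem.2
      have hφτ' : φ τ = sbar ℓ := by
        have h := hφτ
        simp only [neg_inj] at h
        exact h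
      have hbefore' : ∀ u ∈ Set.Ico 0 τ, φ u < sbar ℓ := by
        intro u hu
        have h := hbefore u hu
        simp only [neg_lt_neg_iff] at h
        exact h
      have key := aux_le_of_deriv_nonneg (a := 0) (b := τ) hτ0.le
        (ψ := fun t => (sbar ℓ - φ t) * Real.exp (L * t))
        (g := fun t => (0 - f (φ t)) * Real.exp (L * t) +
          (sbar ℓ - φ t) * (Real.exp (L * t) * (L * 1)))
        ((continuousOn_const.sub (hcontT.mono (Set.Icc_subset_Icc le_rfl hτT))).mul
          ((Real.continuous_exp.comp (continuous_const.mul continuous_id)).continuousOn))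
        (fun t ht => ((hasDerivAt_const t (sbar ℓ)).sub (hder t ht.1)).mul
          (((hasDerivAt_id t).const_mul L).exp))
        (fun t ht => by
          beta_reduce
          have h0t : 0 ≤ φ t := hpos0 t ⟨ht.1.le, ht.2.le.trans hτT⟩
          have hlt' : φ t < sbar ℓ := hbefore' t ⟨ht.1.le, ht.2⟩
          have hfle : f (φ t) ≤ L * (sbar ℓ - φ t) := hfL1 _ h0t hlt'.le
          nlinarith [mul_nonneg (sub_nonneg.2 hfle) (Real.exp_pos (L * t)).le])
      simp only [hφ0, hφτ', mul_zero, Real.exp_zero, sub_self, zero_mul, mul_one] at key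
      linarith
    have hmono : ∀ a b, 0 ≤ a → a ≤ b → b ≤ T → φ a ≤ φ b := by
      intro a b ha hab hbT
      exact aux_le_of_deriv_nonneg (g := fun t => f (φ t)) hab
        (hcontφ.mono (fun x hx => ha.trans hx.1))
        (fun t ht => hder t (ha.trans_lt ht.1))
        (fun t ht => (hf_pos (φ t) (hpos0 t ⟨ha.trans ht.1.le, ht.2.le.trans hbT⟩)
          (hlt t ⟨ha.trans ht.1.le, ht.2.le.trans hbT⟩)).le)
    have hs₀s : s₀ ≤ s := by
      have h := hmono 0 T le_rfl hT le_rfl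
      rwa [hφ0, hφT] at h
    have hsltl : s < sbar ℓ := by
      have h := hlt T ⟨hT, le_rfl⟩
      rwa [hφT] at h
    constructor
    · have key := aux_le_of_deriv_nonneg (a := 0) (b := T) hT
        (ψ := fun t => M * t - φ t) (g := fun t => M * 1 - f (φ t))
        ((continuous_const.mul continuous_id).continuousOn.sub hcontT)
        (fun t ht => ((hasDerivAt_id t).const_mul M).sub (hder t ht.1))
        (fun t ht => by
          beta_reduce
          have h0t : 0 ≤ φ t := hpos0 t ⟨ht.1.le, ht.2.le⟩
          have hup := hf_upper (φ t) h0t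
          have hM1 : D * sIn ≤ M := le_max_left _ _
          simp only [mul_one]
          linarith)
      simp only [hφ0, hφT, mul_zero, zero_sub, mul_one] at key
      rw [abs_of_nonneg (by linarith : (0:ℝ) ≤ s - s₀), div_le_iff₀ hMpos]
      linarith
    · have hpos' : 0 < sbar ℓ - s := sub_pos.2 hsltl
      have key := aux_le_of_deriv_nonneg (a := 0) (b := T) hT
        (ψ := fun t => φ t - D * (sbar ℓ - s) * t)
        (g := fun t => f (φ t) - D * (sbar ℓ - s) * 1)
        (hcontT.sub (continuous_const.mul continuous_id).continuousOn)
        (fun t ht => (hder t ht.1).sub ((hasDerivAt_id t).const_mul (D * (sbar ℓ - s))))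
        (fun t ht => by
          beta_reduce
          have h0t : 0 ≤ φ t := hpos0 t ⟨ht.1.le, ht.2.le⟩
          have hltt : φ t < sbar ℓ := hlt t ⟨ht.1.le, ht.2.le⟩
          have hge := hf_ge (φ t) h0t hltt.le
          have hts : φ t ≤ s := by
            have h := hmono t T ht.1.le ht.2.le le_rfl
            rwa [hφT] at h
          have hmul : D * (sbar ℓ - s) ≤ D * (sbar ℓ - φ t) :=
            mul_le_mul_of_nonneg_left (by linarith) hD.le
          simp only [mul_one]
          linarith)
      simp only [hφ0, hφT, mul_zero, sub_zero, mul_one] at key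
      rw [abs_of_nonneg (by linarith : (0:ℝ) ≤ s - s₀), abs_of_pos hpos',
        le_div_iff₀ (mul_pos hD hpos')]
      linarith
  · -- Case 2 : sbar ℓ < s₀
    have hgt : ∀ t ∈ Set.Icc 0 T, sbar ℓ < φ t := by
      by_contra hcon
      push_neg at hcon
      obtain ⟨t₂, ht₂, ht₂le⟩ := hcon
      obtain ⟨τ, hτmem, hφτ, hbefore⟩ := aux_first_hit hcontT
        (by rw [hφ0]; exact h1) ⟨t₂, ht₂, ht₂le⟩
      have hτ0 := hτmem.1
      have hτT := hτmem.2
      have hub : ∀ t ∈ Set.Icc 0 τ, φ t ≤ s₀ := by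
        intro t ht
        have key := aux_le_of_deriv_nonneg (a := 0) (b := t) ht.1
          (ψ := fun u => -φ u) (g := fun u => -f (φ u))
          ((hcontT.mono (Set.Icc_subset_Icc le_rfl (ht.2.trans hτT))).neg)
          (fun u hu => (hder u hu.1).neg)
          (fun u hu => by
            beta_reduce
            have hgt' : sbar ℓ < φ u := hbefore u ⟨hu.1.le, lt_of_lt_of_le hu.2 ht.2⟩
            have := hf_neg (φ u) hgt'
            linarith)
        simp only [hφ0] at key
        linarith
      have key := aux_le_of_deriv_nonneg (a := 0) (b := τ) hτ0.le
        (ψ := fun t => (φ t - sbar ℓ) * Real.exp (L * t))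
        (g := fun t => (f (φ t) - 0) * Real.exp (L * t) +
          (φ t - sbar ℓ) * (Real.exp (L * t) * (L * 1)))
        (((hcontT.mono (Set.Icc_subset_Icc le_rfl hτT)).sub continuousOn_const).mul
          ((Real.continuous_exp.comp (continuous_const.mul continuous_id)).continuousOn))
        (fun t ht => ((hder t ht.1).sub (hasDerivAt_const t (sbar ℓ))).mul
          (((hasDerivAt_id t).const_mul L).exp))
        (fun t ht => by
          beta_reduce
          have hgt' : sbar ℓ < φ t := hbefore t ⟨ht.1.le, ht.2⟩
          have hub' : φ t ≤ sbar 1 := (hub t ⟨ht.1.le, ht.2.le⟩).trans hs₀.2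
          have hfge := hfL2 (φ t) hgt'.le hub'
          nlinarith [mul_nonneg (by linarith : (0:ℝ) ≤ f (φ t) + L * (φ t - sbar ℓ))
            (Real.exp_pos (L * t)).le])
      simp only [hφ0, hφτ, mul_zero, Real.exp_zero, sub_self, zero_mul, mul_one] at key
      linarith
    have hanti : ∀ a b, 0 ≤ a → a ≤ b → b ≤ T → φ b ≤ φ a := by
      intro a b ha hab hbT
      have key := aux_le_of_deriv_nonneg (a := a) (b := b) hab
        (ψ := fun u => -φ u) (g := fun u => -f (φ u))
        ((hcontφ.mono (fun x hx => ha.trans hx.1)).neg)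
        (fun t ht => (hder t (ha.trans_lt ht.1)).neg)
        (fun t ht => by
          beta_reduce
          have hgt' : sbar ℓ < φ t := hgt t ⟨ha.trans ht.1.le, ht.2.le.trans hbT⟩
          have := hf_neg (φ t) hgt'
          linarith)
      simpa using key
    have hss₀ : s ≤ s₀ := by
      have h := hanti 0 T le_rfl hT le_rfl
      rwa [hφ0, hφT] at h
    have hsgt : sbar ℓ < s := by
      have h := hgt T ⟨hT, le_rfl⟩
      rwa [hφT] at h
    have hrange : ∀ t ∈ Set.Icc 0 T, 0 ≤ φ t ∧ φ t ≤ sbar 1 := by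
      intro t ht
      have ha := hgt t ht
      have hb : φ t ≤ s₀ := by
        have h := hanti 0 t le_rfl ht.1 ht.2
        rwa [hφ0] at h
      exact ⟨(hsblpos.trans ha).le, hb.trans hs₀.2⟩
    constructor
    · have key := aux_le_of_deriv_nonneg (a := 0) (b := T) hT
        (ψ := fun t => M * t + φ t) (g := fun t => M * 1 + f (φ t))
        ((continuous_const.mul continuous_id).continuousOn.add hcontT)
        (fun t ht => ((hasDerivAt_id t).const_mul M).add (hder t ht.1))
        (fun t ht => by
          beta_reduce
          obtain ⟨ha, hb⟩ := hrange t ⟨ht.1.le, ht.2.le⟩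
          have hlow := hf_lower (φ t) ha hb
          have hM2 : k * μ (sbar 1) * (ℓ:ℝ) ≤ M := le_max_right _ _
          simp only [mul_one]
          linarith)
      simp only [hφ0, hφT, mul_zero, zero_add, mul_one] at key
      rw [abs_of_nonpos (by linarith : s - s₀ ≤ 0), div_le_iff₀ hMpos]
      linarith
    · have hpos' : 0 < s - sbar ℓ := sub_pos.2 hsgt
      have key := aux_le_of_deriv_nonneg (a := 0) (b := T) hT
        (ψ := fun t => -φ t - D * (s - sbar ℓ) * t)
        (g := fun t => -f (φ t) - D * (s - sbar ℓ) * 1)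
        (hcontT.neg.sub (continuous_const.mul continuous_id).continuousOn)
        (fun t ht => ((hder t ht.1).neg).sub ((hasDerivAt_id t).const_mul (D * (s - sbar ℓ))))
        (fun t ht => by
          beta_reduce
          have hgtt : sbar ℓ < φ t := hgt t ⟨ht.1.le, ht.2.le⟩
          have hle' := hf_le (φ t) hgtt.le
          have hts : s ≤ φ t := by
            have h := hanti t T ht.1.le ht.2.le le_rfl
            rwa [hφT] at h
          have hmul : D * (s - sbar ℓ) ≤ D * (φ t - sbar ℓ) :=
            mul_le_mul_of_nonneg_left (by linarith) hD.le
          simp only [mul_one]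
          linarith)
      simp only [hφ0, hφT, mul_zero, sub_zero, mul_one] at key
      rw [abs_of_nonpos (by linarith : s - s₀ ≤ 0),
        abs_sub_comm (sbar ℓ) s, abs_of_pos hpos', le_div_iff₀ (mul_pos hD hpos')]
      linarith
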